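/- For odd coprime n₁, n₂ ∈ ℤ[i] and any r ∈ ℤ[i], the twisted quartic Gauss sum satisfies g(r, n₁n₂) = (n₂/n₁)₄ (n₁/n₂)₄ g(r, n₁) g(r, n₂). -/

import Mathlib

set_option maxHeartbeats 1000000
set_option synthInstance.maxHeartbeats 400000

noncomputable section
open Complex
open scoped ComplexConjugate Classical

/-- `n` is primary: `n ≡ 1 mod (1+i)^3` in `ℤ[i]`. -/
def IsPrimary (n : GaussianInt) : Prop := (⟨1, 1⟩ : GaussianInt) ^ 3 ∣ n - 1

/-- The additive character `ẽ(z) = exp(2πi (z/(2i) - z̄/(2i)))` on `ℚ(i)`. -/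
def echar (z : ℂ) : ℂ :=
  Complex.exp (2 * Real.pi * I * (z / (2 * I) - (conj z) / (2 * I)))

/-- The quartic residue symbol `(a/ϖ)₄` at a Gaussian prime `ϖ`: the unique fourth root of
unity `ζ ∈ {1, -1, i, -i}` with `a^((N(ϖ)-1)/4) ≡ ζ (mod ϖ)`, or `0` if `ϖ ∣ a`. -/
def quarticSymbolPrime (a ϖ : GaussianInt) : GaussianInt :=
  if ϖ ∣ a then 0
  else if h : ∃ ζ : GaussianInt,
      ζ ∈ ({1, -1, ⟨0, 1⟩, ⟨0, -1⟩} : Set GaussianInt) ∧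
      ϖ ∣ a ^ (((Zsqrtd.norm ϖ).natAbs - 1) / 4) - ζ
    then h.choose else 0

/-- The quartic residue symbol `(a/n)₄` for odd `n ∈ ℤ[i]`, extended multiplicatively from
Gaussian primes, with value `1` when `n` is a unit. -/
def quarticSymbol (a n : GaussianInt) : GaussianInt :=
  if n = 0 then 0
  else ((UniqueFactorizationMonoid.factors n).map fun ϖ => quarticSymbolPrime a ϖ).prod

/-- The twisted quartic Gauss sum `g(k,n) = Σ_{x mod n} (x/n)₄ ẽ(kx/n)`. -/
def gaussSumK (k n : GaussianInt) : ℂ :=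
  ∑ᶠ x : GaussianInt ⧸ Ideal.span {n},
    GaussianInt.toComplex (quarticSymbol x.out n) *
      echar (GaussianInt.toComplex k * GaussianInt.toComplex x.out / GaussianInt.toComplex n)

/-- The quartic Gauss sum `g(n) = g(1,n)`. -/
def quarticGaussSum (n : GaussianInt) : ℂ := gaussSumK 1 n

/-! ### ℤ-module infrastructure for `ℤ[i]` -/

def gaussAddEquivFun : GaussianInt ≃+ (Fin 2 → ℤ) where
  toFun z := ![z.re, z.im]
  invFun f := ⟨f 0, f 1⟩
  left_inv z := rfl
  right_inv f := by ext i; fin_cases i <;> rfl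
  map_add' a b := by ext i; fin_cases i <;> rfl

def gaussLinearEquivFun : GaussianInt ≃ₗ[ℤ] (Fin 2 → ℤ) :=
  gaussAddEquivFun.toIntLinearEquiv

instance : Module.Free ℤ GaussianInt := Module.Free.of_equiv gaussLinearEquivFun.symm
instance : Module.Finite ℤ GaussianInt := Module.Finite.equiv gaussLinearEquivFun.symm

def gaussBasis : Module.Basis (Fin 2) ℤ GaussianInt := Module.Basis.ofEquivFun gaussLinearEquivFun

lemma algebraNorm_eq (z : GaussianInt) : Algebra.norm ℤ z = Zsqrtd.norm z := by
  rw [Algebra.norm_eq_matrix_det gaussBasis, Matrix.det_fin_two]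
  simp [Algebra.leftMulMatrix_eq_repr_mul, gaussBasis, gaussLinearEquivFun, gaussAddEquivFun,
    Zsqrtd.norm]
  show (z * ⟨1, 0⟩).re * (z * ⟨0, 1⟩).im - (z * ⟨0, 1⟩).re * (z * ⟨1, 0⟩).im = _
  simp [Zsqrtd.re_mul, Zsqrtd.im_mul]

lemma quotFinite {n : GaussianInt} (h : n ≠ 0) : Finite (GaussianInt ⧸ Ideal.span {n}) := by
  rw [← Ideal.absNorm_ne_zero_iff, Ideal.absNorm_span_singleton]
  simpa using h

/-! ### echar lemmas -/

lemma echar_eq (z : ℂ) : echar z = Complex.exp (2 * Real.pi * I * z.im) := by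
  rw [echar]
  congr 1
  have h2I : (2 * I : ℂ) ≠ 0 := by simp [I_ne_zero]
  rw [div_sub_div_same, Complex.sub_conj]
  push_cast
  field_simp

lemma echar_add (a b : ℂ) : echar (a + b) = echar a * echar b := by
  rw [echar_eq, echar_eq, echar_eq, ← Complex.exp_add]
  congr 1
  rw [Complex.add_im]
  push_cast
  ring

lemma echar_gauss (g : GaussianInt) : echar (GaussianInt.toComplex g) = 1 := by
  rw [echar_eq]
  have him : (GaussianInt.toComplex g).im = (g.im : ℝ) := by
    rw [GaussianInt.toComplex_def]; simp
  rw [him]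
  rw [show (2 * (Real.pi:ℂ) * I * ((g.im:ℝ) : ℂ)) = (g.im : ℤ) * (2 * Real.pi * I) by
    push_cast; ring]
  exact Complex.exp_int_mul_two_pi_mul_I g.im

/-! ### prime-level lemmas -/

lemma dite_choose_congr {α : Type*} {p q : α → Prop} (h : p = q) {d : α} :
    (if h' : ∃ x, p x then h'.choose else d) = (if h' : ∃ x, q x then h'.choose else d) := by
  subst h; rfl

lemma qsp_congr {ϖ a b : GaussianInt} (h : ϖ ∣ a - b) :
    quarticSymbolPrime a ϖ = quarticSymbolPrime b ϖ := by
  set m := ((Zsqrtd.norm ϖ).natAbs - 1) / 4 with hm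
  have hpow : ϖ ∣ a ^ m - b ^ m := h.trans (sub_dvd_pow_sub_pow a b m)
  have h1 : (ϖ ∣ a) ↔ (ϖ ∣ b) := by
    constructor
    · intro hd
      have h' := dvd_sub hd h
      rwa [show a - (a - b) = b by ring] at h'
    · intro hd
      have h' := dvd_add hd h
      rwa [show b + (a - b) = a by ring] at h'
  have h2 : (fun ζ : GaussianInt => ζ ∈ ({1, -1, ⟨0, 1⟩, ⟨0, -1⟩} : Set GaussianInt) ∧
        ϖ ∣ a ^ m - ζ) =
      (fun ζ : GaussianInt => ζ ∈ ({1, -1, ⟨0, 1⟩, ⟨0, -1⟩} : Set GaussianInt) ∧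
        ϖ ∣ b ^ m - ζ) := by
    funext ζ
    have hiff : (ϖ ∣ a ^ m - ζ) ↔ (ϖ ∣ b ^ m - ζ) := by
      constructor
      · intro hd
        have h' := dvd_sub hd hpow
        rwa [show a ^ m - ζ - (a ^ m - b ^ m) = b ^ m - ζ by ring] at h'
      · intro hd
        have h' := dvd_add hd hpow
        rwa [show b ^ m - ζ + (a ^ m - b ^ m) = a ^ m - ζ by ring] at h'
    rw [propext (and_congr_right fun _ => hiff)]
  rw [quarticSymbolPrime, quarticSymbolPrime]
  exact if_congr h1 rfl (dite_choose_congr h2)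

lemma qsp_assoc {ϖ ϖ' : GaussianInt} (h : Associated ϖ ϖ') (a : GaussianInt) :
    quarticSymbolPrime a ϖ = quarticSymbolPrime a ϖ' := by
  have hnorm : (Zsqrtd.norm ϖ).natAbs = (Zsqrtd.norm ϖ').natAbs := by
    obtain ⟨u, rfl⟩ := h
    rw [Zsqrtd.norm_mul, Int.natAbs_mul, Zsqrtd.norm_eq_one_iff.mpr u.isUnit, mul_one]
  have hdvd : ∀ k : GaussianInt, (ϖ ∣ k) ↔ (ϖ' ∣ k) := fun k => h.dvd_iff_dvd_left
  rw [quarticSymbolPrime, quarticSymbolPrime, hnorm]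
  exact if_congr (hdvd a) rfl (dite_choose_congr (funext fun ζ =>
    propext (and_congr_right fun _ => hdvd _)))

lemma Smem_mul {ζ₁ ζ₂ : GaussianInt}
    (h1 : ζ₁ ∈ ({1, -1, ⟨0, 1⟩, ⟨0, -1⟩} : Set GaussianInt))
    (h2 : ζ₂ ∈ ({1, -1, ⟨0, 1⟩, ⟨0, -1⟩} : Set GaussianInt)) :
    ζ₁ * ζ₂ ∈ ({1, -1, ⟨0, 1⟩, ⟨0, -1⟩} : Set GaussianInt) := by
  simp only [Set.mem_insert_iff, Set.mem_singleton_iff] at h1 h2 ⊢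
  rcases h1 with rfl | rfl | rfl | rfl <;> rcases h2 with rfl | rfl | rfl | rfl <;> decide

lemma diff_dvd_two {ζ ζ' : GaussianInt}
    (h1 : ζ ∈ ({1, -1, ⟨0, 1⟩, ⟨0, -1⟩} : Set GaussianInt))
    (h2 : ζ' ∈ ({1, -1, ⟨0, 1⟩, ⟨0, -1⟩} : Set GaussianInt)) (hne : ζ ≠ ζ') :
    ζ - ζ' ∣ 2 := by
  simp only [Set.mem_insert_iff, Set.mem_singleton_iff] at h1 h2
  rcases h1 with rfl | rfl | rfl | rfl <;> rcases h2 with rfl | rfl | rfl | rfl <;>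
    first
      | exact absurd rfl hne
      | exact ⟨1, by decide⟩
      | exact ⟨-1, by decide⟩
      | exact ⟨⟨1, 1⟩, by decide⟩
      | exact ⟨⟨1, -1⟩, by decide⟩
      | exact ⟨⟨-1, 1⟩, by decide⟩
      | exact ⟨⟨-1, -1⟩, by decide⟩
      | exact ⟨⟨0, 1⟩, by decide⟩
      | exact ⟨⟨0, -1⟩, by decide⟩

lemma root_unique {ϖ c ζ ζ' : GaussianInt} (h2 : ¬ ϖ ∣ 2)
    (hζ : ζ ∈ ({1, -1, ⟨0, 1⟩, ⟨0, -1⟩} : Set GaussianInt))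
    (hζ' : ζ' ∈ ({1, -1, ⟨0, 1⟩, ⟨0, -1⟩} : Set GaussianInt))
    (hd : ϖ ∣ c - ζ) (hd' : ϖ ∣ c - ζ') : ζ = ζ' := by
  by_contra hne
  have hsub : ϖ ∣ ζ - ζ' := by
    have h' := dvd_sub hd' hd
    rwa [show c - ζ' - (c - ζ) = ζ - ζ' by ring] at h'
  exact h2 (hsub.trans (diff_dvd_two hζ hζ' hne))

/-! ### Fermat's little theorem in `ℤ[i]` and norms mod 4 -/

lemma fermat_gauss {ϖ a : GaussianInt} (hp : Prime ϖ) (ha : ¬ ϖ ∣ a) :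
    ϖ ∣ a ^ ((Zsqrtd.norm ϖ).natAbs - 1) - 1 := by
  set I : Ideal GaussianInt := Ideal.span {ϖ} with hI
  haveI hprime : I.IsPrime := (Ideal.span_singleton_prime hp.ne_zero).mpr hp
  have hbot : I ≠ ⊥ := by simp [hI, Ideal.span_singleton_eq_bot, hp.ne_zero]
  haveI : I.IsMaximal := IsPrime.to_maximal_ideal hbot
  letI : Field (GaussianInt ⧸ I) := Ideal.Quotient.field I
  haveI : Finite (GaussianInt ⧸ I) := quotFinite hp.ne_zero
  haveI : Fintype (GaussianInt ⧸ I) := Fintype.ofFinite _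
  have hcard : Fintype.card (GaussianInt ⧸ I) = (Zsqrtd.norm ϖ).natAbs := by
    rw [← Nat.card_eq_fintype_card, ← Submodule.cardQuot_apply, ← Ideal.absNorm_apply,
      Ideal.absNorm_span_singleton, algebraNorm_eq]
  have hne : (Ideal.Quotient.mk I a) ≠ 0 := by
    rw [Ne, Ideal.Quotient.eq_zero_iff_mem, hI, Ideal.mem_span_singleton]
    exact ha
  have hpow := FiniteField.pow_card_sub_one_eq_one (Ideal.Quotient.mk I a) hne
  rw [hcard] at hpow
  rw [← Ideal.mem_span_singleton, ← hI, ← Ideal.Quotient.eq_zero_iff_mem]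
  rw [map_sub, map_pow, map_one, hpow, sub_self]

lemma norm_mod_four {ϖ : GaussianInt} (hodd : ¬ (⟨1, 1⟩ : GaussianInt) ∣ ϖ) :
    4 ∣ (Zsqrtd.norm ϖ).natAbs - 1 ∧ 1 ≤ (Zsqrtd.norm ϖ).natAbs := by
  have hparity : ϖ.re % 2 ≠ ϖ.im % 2 := by
    intro h
    apply hodd
    have h2 : (2:ℤ) ∣ (ϖ.im - ϖ.re) := by omega
    obtain ⟨k, hk⟩ := h2
    refine ⟨⟨ϖ.re + k, k⟩, ?_⟩
    ext <;> simp [Zsqrtd.re_mul, Zsqrtd.im_mul] <;> omega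
  have hnorm : Zsqrtd.norm ϖ % 4 = 1 := by
    rw [Zsqrtd.norm_def]
    rcases Int.even_or_odd ϖ.re with ⟨k, hk⟩ | ⟨k, hk⟩ <;>
      rcases Int.even_or_odd ϖ.im with ⟨l, hl⟩ | ⟨l, hl⟩
    · omega
    · rw [hk, hl]
      rw [show ((k + k) * (k + k) - -1 * (2*l+1) * (2*l+1) : ℤ) = 4 * (k*k + l*l + l) + 1 by ring]
      omega
    · rw [hk, hl]
      rw [show ((2*k+1) * (2*k+1) - -1 * (l + l) * (l + l) : ℤ) = 4 * (k*k + k + l*l) + 1 by ring]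
      omega
    · omega
  have hnn : 0 ≤ Zsqrtd.norm ϖ := Zsqrtd.norm_nonneg (by norm_num) ϖ
  have hcast : ((Zsqrtd.norm ϖ).natAbs : ℤ) = Zsqrtd.norm ϖ := Int.natAbs_of_nonneg hnn
  constructor
  · have h1 : ((Zsqrtd.norm ϖ).natAbs : ℤ) % 4 = 1 := by rw [hcast]; exact hnorm
    omega
  · have h1 : ((Zsqrtd.norm ϖ).natAbs : ℤ) % 4 = 1 := by rw [hcast]; exact hnorm
    omega

lemma quartic_factor (x : GaussianInt) :
    (x - 1) * (x + 1) * (x - ⟨0, 1⟩) * (x + ⟨0, 1⟩) = x ^ 4 - 1 := by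
  have hi : (⟨0, 1⟩ : GaussianInt) ^ 2 = -1 := by decide
  linear_combination (1 - x ^ 2) * hi

lemma prime_not_dvd_onePlusI {ϖ : GaussianInt} (hp : Prime ϖ) (h2 : ¬ ϖ ∣ 2) :
    ¬ (⟨1, 1⟩ : GaussianInt) ∣ ϖ := by
  intro hd
  obtain ⟨t, rfl⟩ := hd
  rcases hp.irreducible.isUnit_or_isUnit rfl with hu | hu
  · have := Zsqrtd.norm_eq_one_iff.mpr hu
    exact absurd this (by decide)
  · apply h2
    have hassoc : Associated ((⟨1, 1⟩ : GaussianInt) * t) (⟨1, 1⟩ : GaussianInt) :=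
      associated_mul_unit_left _ _ hu
    exact hassoc.dvd_iff_dvd_left.mpr ⟨⟨1, -1⟩, by decide⟩

lemma root_exists {ϖ a : GaussianInt} (hp : Prime ϖ) (h2 : ¬ ϖ ∣ 2) (ha : ¬ ϖ ∣ a) :
    ∃ ζ : GaussianInt, ζ ∈ ({1, -1, ⟨0, 1⟩, ⟨0, -1⟩} : Set GaussianInt) ∧
      ϖ ∣ a ^ (((Zsqrtd.norm ϖ).natAbs - 1) / 4) - ζ := by
  obtain ⟨h4, _⟩ := norm_mod_four (prime_not_dvd_onePlusI hp h2)
  set m := ((Zsqrtd.norm ϖ).natAbs - 1) / 4 with hmdef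
  have hm : 4 * m = (Zsqrtd.norm ϖ).natAbs - 1 := Nat.mul_div_cancel' h4
  have hferm := fermat_gauss hp ha
  have hfct : a ^ ((Zsqrtd.norm ϖ).natAbs - 1) - 1 =
      (a ^ m - 1) * (a ^ m + 1) * (a ^ m - ⟨0, 1⟩) * (a ^ m + ⟨0, 1⟩) := by
    rw [quartic_factor (a ^ m), ← pow_mul, show m * 4 = 4 * m by ring, hm]
  rw [hfct] at hferm
  rcases hp.2.2 _ _ hferm with hferm' | hd
  · rcases hp.2.2 _ _ hferm' with hferm'' | hd
    · rcases hp.2.2 _ _ hferm'' with hd | hd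
      · exact ⟨1, by simp, hd⟩
      · refine ⟨-1, by simp, ?_⟩
        rwa [sub_neg_eq_add]
    · exact ⟨⟨0, 1⟩, by simp, hd⟩
  · refine ⟨⟨0, -1⟩, by simp, ?_⟩
    rwa [show a ^ m - (⟨0, -1⟩ : GaussianInt) = a ^ m + ⟨0, 1⟩ by
      rw [show (⟨0, -1⟩ : GaussianInt) = -⟨0, 1⟩ by decide]; ring]

lemma qsp_mul {ϖ : GaussianInt} (hp : Prime ϖ) (h2 : ¬ ϖ ∣ 2) (a b : GaussianInt) :
    quarticSymbolPrime (a * b) ϖ = quarticSymbolPrime a ϖ * quarticSymbolPrime b ϖ := by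
  by_cases hA : ϖ ∣ a
  · simp only [quarticSymbolPrime]
    rw [if_pos (hA.mul_right b), if_pos hA, zero_mul]
  by_cases hB : ϖ ∣ b
  · simp only [quarticSymbolPrime]
    rw [if_pos (hB.mul_left a), if_pos hB, mul_zero]
  have hAB : ¬ ϖ ∣ a * b := fun h => ((hp.2.2 a b h).elim hA hB)
  have hEA := root_exists hp h2 hA
  have hEB := root_exists hp h2 hB
  have hEAB := root_exists hp h2 hAB
  simp only [quarticSymbolPrime]
  rw [if_neg hAB, if_neg hA, if_neg hB, dif_pos hEA, dif_pos hEB, dif_pos hEAB]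
  set m := ((Zsqrtd.norm ϖ).natAbs - 1) / 4 with hmdef
  obtain ⟨hmemAB, hdAB⟩ := hEAB.choose_spec
  obtain ⟨hmemA, hdA⟩ := hEA.choose_spec
  obtain ⟨hmemB, hdB⟩ := hEB.choose_spec
  have hd' : ϖ ∣ (a * b) ^ m - hEA.choose * hEB.choose := by
    have heq : (a * b) ^ m - hEA.choose * hEB.choose =
        b ^ m * (a ^ m - hEA.choose) + hEA.choose * (b ^ m - hEB.choose) := by
      rw [mul_pow]; ring
    rw [heq]
    exact dvd_add (hdA.mul_left _) (hdB.mul_left _)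
  exact root_unique h2 hmemAB (Smem_mul hmemA hmemB) hdAB hd'

/-! ### symbol-level lemmas -/

open UniqueFactorizationMonoid in
lemma qs_congr {n a b : GaussianInt} (hn : n ≠ 0) (h : n ∣ a - b) :
    quarticSymbol a n = quarticSymbol b n := by
  rw [quarticSymbol, quarticSymbol, if_neg hn, if_neg hn]
  congr 1
  exact Multiset.map_congr rfl fun ϖ hϖ =>
    qsp_congr ((dvd_of_mem_factors hϖ).trans h)

open UniqueFactorizationMonoid in
lemma qs_mul_num {n : GaussianInt} (hn : n ≠ 0) (hcop : IsCoprime n 2) (a b : GaussianInt) :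
    quarticSymbol (a * b) n = quarticSymbol a n * quarticSymbol b n := by
  rw [quarticSymbol, quarticSymbol, quarticSymbol, if_neg hn, if_neg hn, if_neg hn,
    ← Multiset.prod_map_mul]
  congr 1
  refine Multiset.map_congr rfl fun ϖ hϖ => ?_
  have hp : Prime ϖ := prime_of_factor ϖ hϖ
  have hdn : ϖ ∣ n := dvd_of_mem_factors hϖ
  have h2 : ¬ ϖ ∣ 2 := by
    intro h2'
    obtain ⟨u, v, huv⟩ := hcop
    exact hp.not_unit (isUnit_of_dvd_one
      (by rw [← huv]; exact dvd_add ((hdn.mul_left u)) ((h2'.mul_left v))))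
  exact qsp_mul hp h2 a b

open UniqueFactorizationMonoid in
lemma qs_mul_den {n₁ n₂ : GaussianInt} (h1 : n₁ ≠ 0) (h2 : n₂ ≠ 0) (a : GaussianInt) :
    quarticSymbol a (n₁ * n₂) = quarticSymbol a n₁ * quarticSymbol a n₂ := by
  rw [quarticSymbol, quarticSymbol, quarticSymbol, if_neg (mul_ne_zero h1 h2),
    if_neg h1, if_neg h2]
  have hrel := UniqueFactorizationMonoid.factors_mul h1 h2
  have hrel' : Multiset.Rel (fun x y : GaussianInt =>
      quarticSymbolPrime a x = quarticSymbolPrime a y)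
      (factors (n₁ * n₂)) (factors n₁ + factors n₂) :=
    hrel.mono fun x _ y _ h => qsp_assoc h a
  have heq : ((factors (n₁ * n₂)).map fun ϖ => quarticSymbolPrime a ϖ) =
      ((factors n₁ + factors n₂).map fun ϖ => quarticSymbolPrime a ϖ) :=
    Multiset.rel_eq.mp (Multiset.rel_map.mpr hrel')
  rw [heq, Multiset.map_add, Multiset.prod_add]

/-! ### main theorem -/

theorem gaussSumK_mul_right (r n₁ n₂ : GaussianInt) (h1 : IsCoprime n₁ 2)
    (h2 : IsCoprime n₂ 2) (h12 : IsCoprime n₁ n₂) :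
    gaussSumK r (n₁ * n₂) =
      GaussianInt.toComplex (quarticSymbol n₂ n₁) * GaussianInt.toComplex (quarticSymbol n₁ n₂) *
        gaussSumK r n₁ * gaussSumK r n₂ := by
  have hu2 : ¬ IsUnit (2 : GaussianInt) := by
    rw [← Zsqrtd.norm_eq_one_iff]; decide
  have hn₁ : n₁ ≠ 0 := by rintro rfl; exact hu2 (isCoprime_zero_left.mp h1)
  have hn₂ : n₂ ≠ 0 := by rintro rfl; exact hu2 (isCoprime_zero_left.mp h2)
  have hN : n₁ * n₂ ≠ 0 := mul_ne_zero hn₁ hn₂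
  have hc₁ : GaussianInt.toComplex n₁ ≠ 0 := by
    rw [Ne, GaussianInt.toComplex_eq_zero]; exact hn₁
  have hc₂ : GaussianInt.toComplex n₂ ≠ 0 := by
    rw [Ne, GaussianInt.toComplex_eq_zero]; exact hn₂
  haveI : Finite (GaussianInt ⧸ Ideal.span {n₁ * n₂}) := quotFinite hN
  haveI : Finite (GaussianInt ⧸ Ideal.span {n₁}) := quotFinite hn₁
  haveI : Finite (GaussianInt ⧸ Ideal.span {n₂}) := quotFinite hn₂
  haveI : Fintype (GaussianInt ⧸ Ideal.span {n₁ * n₂}) := Fintype.ofFinite _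
  haveI : Fintype (GaussianInt ⧸ Ideal.span {n₁}) := Fintype.ofFinite _
  haveI : Fintype (GaussianInt ⧸ Ideal.span {n₂}) := Fintype.ofFinite _
  obtain ⟨u, v, huv⟩ := id h12
  set Q₁ := GaussianInt ⧸ Ideal.span {n₁}
  set Q₂ := GaussianInt ⧸ Ideal.span {n₂}
  set Q₁₂ := GaussianInt ⧸ Ideal.span {n₁ * n₂}
  set F : Q₁₂ → ℂ := fun x =>
    GaussianInt.toComplex (quarticSymbol x.out (n₁ * n₂)) *
      echar (GaussianInt.toComplex r * GaussianInt.toComplex x.out /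
        GaussianInt.toComplex (n₁ * n₂)) with hF
  set A : Q₁ → ℂ := fun y =>
    GaussianInt.toComplex (quarticSymbol y.out n₁) *
      echar (GaussianInt.toComplex r * GaussianInt.toComplex y.out /
        GaussianInt.toComplex n₁) with hA
  set B : Q₂ → ℂ := fun z =>
    GaussianInt.toComplex (quarticSymbol z.out n₂) *
      echar (GaussianInt.toComplex r * GaussianInt.toComplex z.out /
        GaussianInt.toComplex n₂) with hB
  have hgs12 : gaussSumK r (n₁ * n₂) = ∑ x : Q₁₂, F x := by
    rw [gaussSumK]; exact finsum_eq_sum_of_fintype _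
  have hgs1 : gaussSumK r n₁ = ∑ y : Q₁, A y := by
    rw [gaussSumK]; exact finsum_eq_sum_of_fintype _
  have hgs2 : gaussSumK r n₂ = ∑ z : Q₂, B z := by
    rw [gaussSumK]; exact finsum_eq_sum_of_fintype _
  set φ : Q₁ × Q₂ → Q₁₂ := fun p =>
    Ideal.Quotient.mk (Ideal.span {n₁ * n₂}) (n₂ * p.1.out + n₁ * p.2.out) with hφ
  have hφbij : Function.Bijective φ := by
    constructor
    · rintro ⟨y, z⟩ ⟨y', z'⟩ hEq
      have hmem : (n₁ * n₂) ∣ (n₂ * y.out + n₁ * z.out) - (n₂ * y'.out + n₁ * z'.out) :=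
        Ideal.mem_span_singleton.mp (Ideal.Quotient.eq.mp hEq)
      obtain ⟨c, hc⟩ := hmem
      have hy : n₁ ∣ n₂ * (y.out - y'.out) :=
        ⟨n₂ * c - z.out + z'.out, by linear_combination hc⟩
      have hz : n₂ ∣ n₁ * (z.out - z'.out) :=
        ⟨n₁ * c - y.out + y'.out, by linear_combination hc⟩
      have hy' : n₁ ∣ y.out - y'.out := h12.dvd_of_dvd_mul_left hy
      have hz' : n₂ ∣ z.out - z'.out := h12.symm.dvd_of_dvd_mul_left hz
      have hyy : y = y' := by
        have h' := Ideal.Quotient.eq.mpr (Ideal.mem_span_singleton.mpr hy')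
        rwa [show Ideal.Quotient.mk (Ideal.span {n₁}) y.out = y from Quotient.out_eq y,
          show Ideal.Quotient.mk (Ideal.span {n₁}) y'.out = y' from Quotient.out_eq y'] at h'
      have hzz : z = z' := by
        have h' := Ideal.Quotient.eq.mpr (Ideal.mem_span_singleton.mpr hz')
        rwa [show Ideal.Quotient.mk (Ideal.span {n₂}) z.out = z from Quotient.out_eq z,
          show Ideal.Quotient.mk (Ideal.span {n₂}) z'.out = z' from Quotient.out_eq z'] at h'
      rw [hyy, hzz]
    · intro x
      refine ⟨(Ideal.Quotient.mk (Ideal.span {n₁}) (v * x.out),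
               Ideal.Quotient.mk (Ideal.span {n₂}) (u * x.out)), ?_⟩
      have hy : n₁ ∣ ((Ideal.Quotient.mk (Ideal.span {n₁}) (v * x.out)).out - v * x.out) := by
        rw [← Ideal.mem_span_singleton]
        exact Ideal.Quotient.eq.mp (Quotient.out_eq _)
      have hz : n₂ ∣ ((Ideal.Quotient.mk (Ideal.span {n₂}) (u * x.out)).out - u * x.out) := by
        rw [← Ideal.mem_span_singleton]
        exact Ideal.Quotient.eq.mp (Quotient.out_eq _)
      obtain ⟨c, hc⟩ := hy
      obtain ⟨d, hd⟩ := hz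
      show Ideal.Quotient.mk (Ideal.span {n₁ * n₂}) _ = x
      exact (Ideal.Quotient.eq.mpr (Ideal.mem_span_singleton.mpr
        ⟨c + d, by linear_combination n₂ * hc + n₁ * hd + x.out * huv⟩)).trans
        (Quotient.out_eq x)
  have hkey : ∀ p : Q₁ × Q₂, F (φ p) =
      (GaussianInt.toComplex (quarticSymbol n₂ n₁) *
        GaussianInt.toComplex (quarticSymbol n₁ n₂)) * (A p.1 * B p.2) := by
    rintro ⟨y, z⟩
    have hab : (n₁ * n₂) ∣ (φ (y, z)).out - (n₂ * y.out + n₁ * z.out) := by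
      rw [← Ideal.mem_span_singleton]
      exact Ideal.Quotient.eq.mp
        (show Ideal.Quotient.mk (Ideal.span {n₁ * n₂}) (φ (y, z)).out =
            Ideal.Quotient.mk (Ideal.span {n₁ * n₂}) (n₂ * y.out + n₁ * z.out) from
          Quotient.out_eq _)
    obtain ⟨c, hc⟩ := hab
    have hχ : quarticSymbol (φ (y, z)).out (n₁ * n₂) =
        (quarticSymbol n₂ n₁ * quarticSymbol y.out n₁) *
        (quarticSymbol n₁ n₂ * quarticSymbol z.out n₂) := by
      rw [qs_congr hN ⟨c, hc⟩, qs_mul_den hn₁ hn₂]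
      have e1 : quarticSymbol (n₂ * y.out + n₁ * z.out) n₁ =
          quarticSymbol n₂ n₁ * quarticSymbol y.out n₁ := by
        rw [qs_congr hn₁ (⟨z.out, by ring⟩ : n₁ ∣ (n₂ * y.out + n₁ * z.out) - n₂ * y.out),
          qs_mul_num hn₁ h1]
      have e2 : quarticSymbol (n₂ * y.out + n₁ * z.out) n₂ =
          quarticSymbol n₁ n₂ * quarticSymbol z.out n₂ := by
        rw [qs_congr hn₂ (⟨y.out, by ring⟩ : n₂ ∣ (n₂ * y.out + n₁ * z.out) - n₁ * z.out),
          qs_mul_num hn₂ h2]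
      rw [e1, e2]
    have hε : echar (GaussianInt.toComplex r * GaussianInt.toComplex (φ (y, z)).out /
          GaussianInt.toComplex (n₁ * n₂)) =
        echar (GaussianInt.toComplex r * GaussianInt.toComplex y.out /
          GaussianInt.toComplex n₁) *
        echar (GaussianInt.toComplex r * GaussianInt.toComplex z.out /
          GaussianInt.toComplex n₂) := by
      have hout : (φ (y, z)).out = (n₂ * y.out + n₁ * z.out) + (n₁ * n₂) * c := by
        linear_combination hc
      have harg : GaussianInt.toComplex r * GaussianInt.toComplex (φ (y, z)).out /
          GaussianInt.toComplex (n₁ * n₂) =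
          (GaussianInt.toComplex r * GaussianInt.toComplex y.out / GaussianInt.toComplex n₁ +
           GaussianInt.toComplex r * GaussianInt.toComplex z.out / GaussianInt.toComplex n₂) +
          GaussianInt.toComplex (r * c) := by
        rw [hout]
        push_cast [map_add, map_mul]
        field_simp
      rw [harg, echar_add, echar_add, echar_gauss, mul_one]
    rw [hF]
    simp only []
    rw [hχ, hε, hA, hB]
    simp only [map_mul]
    ring
  calc gaussSumK r (n₁ * n₂) = ∑ x : Q₁₂, F x := hgs12
    _ = ∑ p : Q₁ × Q₂, F (φ p) := (Fintype.sum_bijective φ hφbij _ _ fun _ => rfl).symm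
    _ = ∑ p : Q₁ × Q₂, (GaussianInt.toComplex (quarticSymbol n₂ n₁) *
          GaussianInt.toComplex (quarticSymbol n₁ n₂)) * (A p.1 * B p.2) :=
        Finset.sum_congr rfl fun p _ => hkey p
    _ = GaussianInt.toComplex (quarticSymbol n₂ n₁) *
          GaussianInt.toComplex (quarticSymbol n₁ n₂) *
          gaussSumK r n₁ * gaussSumK r n₂ := by
        rw [hgs1, hgs2, Fintype.sum_prod_type]
        set C := GaussianInt.toComplex (quarticSymbol n₂ n₁) *
          GaussianInt.toComplex (quarticSymbol n₁ n₂) with hC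
        have step1 : ∀ y : Q₁, (∑ z : Q₂, C * (A (y, z).1 * B (y, z).2)) =
            C * A y * (∑ z : Q₂, B z) := by
          intro y
          rw [Finset.mul_sum]
          exact Finset.sum_congr rfl fun z _ => by ring
        calc (∑ y : Q₁, ∑ z : Q₂, C * (A (y, z).1 * B (y, z).2))
            = ∑ y : Q₁, C * A y * (∑ z : Q₂, B z) :=
              Finset.sum_congr rfl fun y _ => step1 y
          _ = (∑ y : Q₁, C * A y) * (∑ z : Q₂, B z) := (Finset.sum_mul _ _ _).symm
          _ = C * (∑ y : Q₁, A y) * (∑ z : Q₂, B z) := by rw [← Finset.mul_sum]
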